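/- Let ℓ ≥ 2. The linear map sending a univariate polynomial q of degree ≤ ℓ on [0,1] to the triple (q(0), q(1), π^{ℓ−2}q), where π^{ℓ−2} is the L²([0,1])-orthogonal projection onto polynomials of degree ≤ ℓ−2, is a linear isomorphism from polynomials of degree ≤ ℓ onto ℝ × ℝ × (polynomials of degree ≤ ℓ−2). -/

import Mathlib

open Polynomial intervalIntegral MeasureTheory

lemma sq_weight_zero (v w : Polynomial ℝ)
    (hv : ∀ x ∈ Set.Ioo (0:ℝ) 1, 0 < v.eval x)
    (h : ∫ x in (0:ℝ)..1, (w.eval x)^2 * v.eval x = 0) : w = 0 := by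
  by_contra hw
  set f : ℝ → ℝ := fun x => (w.eval x)^2 * v.eval x with hf
  have hcont : Continuous f := (w.continuous.pow 2).mul v.continuous
  have hint : IntervalIntegrable f volume 0 1 := hcont.intervalIntegrable _ _
  have hempty : Set.Ioc (1:ℝ) 0 = ∅ := Set.Ioc_eq_empty (by norm_num)
  have hone : (volume.restrict (Set.Ioc (0:ℝ) 1)) {(1:ℝ)} = 0 := by
    rw [Measure.restrict_apply (measurableSet_singleton 1)]
    exact measure_mono_null Set.inter_subset_left (measure_singleton 1)
  have hne1 : ∀ᵐ x ∂(volume.restrict (Set.Ioc (0:ℝ) 1)), x ≠ 1 := by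
    rw [ae_iff]
    convert hone using 2
    ext x; simp
  have hmem : ∀ᵐ x ∂(volume.restrict (Set.Ioc (0:ℝ) 1)), x ∈ Set.Ioc (0:ℝ) 1 :=
    ae_restrict_mem measurableSet_Ioc
  have hnn : 0 ≤ᵐ[volume.restrict (Set.Ioc (0:ℝ) 1 ∪ Set.Ioc 1 0)] f := by
    rw [hempty, Set.union_empty]
    filter_upwards [hne1, hmem] with x hx1 hx
    have hxIoo : x ∈ Set.Ioo (0:ℝ) 1 := ⟨hx.1, lt_of_le_of_ne hx.2 hx1⟩
    exact mul_nonneg (sq_nonneg _) (le_of_lt (hv x hxIoo))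
  have hzero : f =ᵐ[volume.restrict (Set.Ioc (0:ℝ) 1 ∪ Set.Ioc 1 0)] 0 :=
    (integral_eq_zero_iff_of_nonneg_ae hnn hint).mp h
  rw [hempty, Set.union_empty] at hzero
  have hN : volume ({x | f x ≠ 0} ∩ Set.Ioc (0:ℝ) 1) = 0 := by
    have := hzero
    rw [Filter.EventuallyEq, ae_iff, Measure.restrict_apply] at this
    · simpa using this
    · exact (hcont.measurable (measurableSet_singleton 0)).compl
  have hroots : volume {x : ℝ | w.IsRoot x} = 0 :=
    (Polynomial.finite_setOf_isRoot hw).measure_zero _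
  have hsub : Set.Ioo (0:ℝ) 1 \ {x : ℝ | w.IsRoot x} ⊆ {x | f x ≠ 0} ∩ Set.Ioc (0:ℝ) 1 := by
    rintro x ⟨hx, hxr⟩
    refine ⟨?_, Set.Ioo_subset_Ioc_self hx⟩
    exact ne_of_gt (mul_pos (pow_two_pos_of_ne_zero hxr) (hv x hx))
  have h1 : volume (Set.Ioo (0:ℝ) 1 \ {x : ℝ | w.IsRoot x}) = 0 :=
    measure_mono_null hsub hN
  rw [measure_diff_null hroots] at h1
  simp [Real.volume_Ioo] at h1

theorem eval_eval_proj_isomorphism (ℓ : ℕ) (hℓ : 2 ≤ ℓ)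
    (proj : Polynomial ℝ → Polynomial ℝ)
    (hdeg : ∀ q : Polynomial ℝ, proj q ∈ Polynomial.degreeLT ℝ (ℓ - 1))
    (horth : ∀ q : Polynomial ℝ, ∀ p ∈ Polynomial.degreeLT ℝ (ℓ - 1),
      ∫ x in (0:ℝ)..1, (q.eval x - (proj q).eval x) * p.eval x = 0) :
    (∀ a b : ℝ, ∀ q ∈ Polynomial.degreeLT ℝ (ℓ + 1),
      ∀ r ∈ Polynomial.degreeLT ℝ (ℓ + 1),
        proj (a • q + b • r) = a • proj q + b • proj r) ∧
    Set.BijOn (fun q : Polynomial ℝ => (q.eval 0, q.eval 1, proj q))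
      (Polynomial.degreeLT ℝ (ℓ + 1) : Set (Polynomial ℝ))
      {t : ℝ × ℝ × Polynomial ℝ | t.2.2 ∈ Polynomial.degreeLT ℝ (ℓ - 1)} := by
  -- uniqueness of the projection
  have huniq : ∀ (q u : Polynomial ℝ), u ∈ Polynomial.degreeLT ℝ (ℓ - 1) →
      (∀ p ∈ Polynomial.degreeLT ℝ (ℓ - 1),
        ∫ x in (0:ℝ)..1, (q.eval x - u.eval x) * p.eval x = 0) → u = proj q := by
    intro q u hu hint
    have key : ∀ p ∈ Polynomial.degreeLT ℝ (ℓ - 1),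
        ∫ x in (0:ℝ)..1, (u - proj q).eval x * p.eval x = 0 := by
      intro p hp
      have e : Set.EqOn (fun x => (u - proj q).eval x * p.eval x)
          (fun x => (q.eval x - (proj q).eval x) * p.eval x
            - (q.eval x - u.eval x) * p.eval x) (Set.uIcc (0:ℝ) 1) := by
        intro x _; simp only [Polynomial.eval_sub]; ring
      rw [intervalIntegral.integral_congr e,
        intervalIntegral.integral_sub
          (f := fun x => (q.eval x - (proj q).eval x) * p.eval x)
          (g := fun x => (q.eval x - u.eval x) * p.eval x)
          (((q.continuous.sub (proj q).continuous).mul p.continuous).intervalIntegrable _ _)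
          (((q.continuous.sub u.continuous).mul p.continuous).intervalIntegrable _ _),
        horth q p hp, hint p hp, sub_zero]
    have hw : u - proj q ∈ Polynomial.degreeLT ℝ (ℓ - 1) :=
      Submodule.sub_mem _ hu (hdeg q)
    have h2 : ∫ x in (0:ℝ)..1, ((u - proj q).eval x)^2 * (1:Polynomial ℝ).eval x = 0 := by
      have := key _ hw
      rw [intervalIntegral.integral_congr
        (show Set.EqOn (fun x => ((u - proj q).eval x)^2 * (1:Polynomial ℝ).eval x)
          (fun x => (u - proj q).eval x * (u - proj q).eval x) (Set.uIcc (0:ℝ) 1) by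
          intro x _; simp [sq])]
      exact this
    have hz := sq_weight_zero 1 (u - proj q) (by intro x _; norm_num) h2
    have := sub_eq_zero.mp hz
    exact this
  -- linearity of proj, everywhere
  have hlin : ∀ (a b : ℝ) (q r : Polynomial ℝ),
      proj (a • q + b • r) = a • proj q + b • proj r := by
    intro a b q r
    refine (huniq (a • q + b • r) (a • proj q + b • proj r)
      (Submodule.add_mem _ (Submodule.smul_mem _ _ (hdeg q))
        (Submodule.smul_mem _ _ (hdeg r))) ?_).symm
    intro p hp
    have e : Set.EqOn
        (fun x => ((a • q + b • r).eval x - (a • proj q + b • proj r).eval x) * p.eval x)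
        (fun x => a * ((q.eval x - (proj q).eval x) * p.eval x)
          + b * ((r.eval x - (proj r).eval x) * p.eval x)) (Set.uIcc (0:ℝ) 1) := by
      intro x _
      simp only [Polynomial.eval_add, Polynomial.eval_smul, smul_eq_mul]
      ring
    rw [intervalIntegral.integral_congr e,
      intervalIntegral.integral_add
        (f := fun x => a * ((q.eval x - (proj q).eval x) * p.eval x))
        (g := fun x => b * ((r.eval x - (proj r).eval x) * p.eval x))
        ((continuous_const.mul ((q.continuous.sub (proj q).continuous).mul p.continuous)).intervalIntegrable _ _)
        ((continuous_const.mul ((r.continuous.sub (proj r).continuous).mul p.continuous)).intervalIntegrable _ _),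
      intervalIntegral.integral_const_mul, intervalIntegral.integral_const_mul,
      horth q p hp, horth r p hp]
    ring
  -- kernel lemma
  have hker : ∀ s : Polynomial ℝ, s ∈ Polynomial.degreeLT ℝ (ℓ + 1) →
      s.eval 0 = 0 → s.eval 1 = 0 → proj s = 0 → s = 0 := by
    intro s hs h0 h1 hps
    have horth0 : ∀ p ∈ Polynomial.degreeLT ℝ (ℓ - 1),
        ∫ x in (0:ℝ)..1, s.eval x * p.eval x = 0 := by
      intro p hp
      have := horth s p hp
      rw [hps] at this
      simpa using this
    have hX : (X : Polynomial ℝ) ∣ s := Polynomial.X_dvd_iff.mpr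
      (by rwa [Polynomial.coeff_zero_eq_eval_zero])
    have hX1 : (X - C 1 : Polynomial ℝ) ∣ s := Polynomial.dvd_iff_isRoot.mpr h1
    have hcop : IsCoprime (X : Polynomial ℝ) (X - C 1) := ⟨1, -1, by ring_nf; simp⟩
    obtain ⟨t, hst⟩ := hcop.mul_dvd hX hX1
    rcases eq_or_ne t 0 with rfl | ht0
    · simpa using hst
    · have hXX : (X * (X - C 1) : Polynomial ℝ) ≠ 0 :=
        mul_ne_zero Polynomial.X_ne_zero (Polynomial.X_sub_C_ne_zero 1)
      have hsne : s ≠ 0 := hst ▸ mul_ne_zero hXX ht0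
      have hdt : t ∈ Polynomial.degreeLT ℝ (ℓ - 1) := by
        rw [Polynomial.mem_degreeLT, ← Polynomial.natDegree_lt_iff_degree_lt ht0]
        have hds : s.degree < ((ℓ + 1 : ℕ) : WithBot ℕ) := Polynomial.mem_degreeLT.mp hs
        have hnds : s.natDegree < ℓ + 1 :=
          (Polynomial.natDegree_lt_iff_degree_lt hsne).mpr hds
        have hnd2 : s.natDegree = 2 + t.natDegree := by
          rw [hst, Polynomial.natDegree_mul hXX ht0]
          congr 1
          rw [Polynomial.natDegree_mul Polynomial.X_ne_zero
            (Polynomial.X_sub_C_ne_zero 1), Polynomial.natDegree_X,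
            Polynomial.natDegree_X_sub_C]
        omega
      have hi := horth0 t hdt
      have h2 : ∫ x in (0:ℝ)..1, (t.eval x)^2 * ((X * (1 - X) : Polynomial ℝ).eval x) = 0 := by
        have e : Set.EqOn (fun x => (t.eval x)^2 * ((X * (1 - X) : Polynomial ℝ).eval x))
            (fun x => -(s.eval x * t.eval x)) (Set.uIcc (0:ℝ) 1) := by
          intro x _
          rw [hst]
          simp only [Polynomial.eval_mul, Polynomial.eval_sub, Polynomial.eval_X,
            Polynomial.eval_one, Polynomial.eval_C]
          ring
        rw [intervalIntegral.integral_congr e, intervalIntegral.integral_neg, hi, neg_zero]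
      have ht := sq_weight_zero (X * (1 - X)) t (by
        intro x hx
        simp only [Polynomial.eval_mul, Polynomial.eval_sub, Polynomial.eval_X,
          Polynomial.eval_one]
        exact mul_pos hx.1 (by linarith [hx.2])) h2
      exact absurd ht ht0
  have hprojsub : ∀ q r : Polynomial ℝ, proj (q - r) = proj q - proj r := by
    intro q r
    have := hlin 1 (-1) q r
    simpa [sub_eq_add_neg] using this
  refine ⟨fun a b q _ r _ => hlin a b q r, fun q hq => hdeg q, ?_, ?_⟩
  · -- InjOn
    intro q hq r hr h
    simp only [Prod.mk.injEq] at h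
    have h0 : q - r = 0 := by
      refine hker (q - r) (Submodule.sub_mem _ hq hr) ?_ ?_ ?_
      · simp [h.1]
      · simp [h.2.1]
      · rw [hprojsub, h.2.2, sub_self]
    exact sub_eq_zero.mp h0
  · -- SurjOn
    haveI i1 : FiniteDimensional ℝ (Polynomial.degreeLT ℝ (ℓ + 1)) :=
      (Polynomial.degreeLTEquiv ℝ (ℓ + 1)).symm.finiteDimensional
    haveI i2 : FiniteDimensional ℝ (Polynomial.degreeLT ℝ (ℓ - 1)) :=
      (Polynomial.degreeLTEquiv ℝ (ℓ - 1)).symm.finiteDimensional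
    set L : (Polynomial.degreeLT ℝ (ℓ + 1) : Submodule ℝ (Polynomial ℝ)) →ₗ[ℝ]
        ℝ × ℝ × (Polynomial.degreeLT ℝ (ℓ - 1) : Submodule ℝ (Polynomial ℝ)) :=
      { toFun := fun q => (q.1.eval 0, q.1.eval 1, ⟨proj q.1, hdeg q.1⟩),
        map_add' := by
          intro x y
          have hl := hlin 1 1 x.1 y.1
          simp only [one_smul] at hl
          refine Prod.ext (by simp) (Prod.ext (by simp) (Subtype.ext ?_))
          simpa using hl
        map_smul' := by
          intro a x
          have hl := hlin a 0 x.1 0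
          simp only [zero_smul, add_zero, smul_zero] at hl
          refine Prod.ext (by simp) (Prod.ext (by simp) (Subtype.ext ?_))
          simpa using hl } with hL
    have hinj : Function.Injective L := by
      intro x y hxy
      have h0 := congrArg Prod.fst hxy
      have h1 := congrArg (fun z : ℝ × ℝ × (Polynomial.degreeLT ℝ (ℓ - 1) : Submodule ℝ (Polynomial ℝ)) => z.2.1) hxy
      have h2 := congrArg (fun z : ℝ × ℝ × (Polynomial.degreeLT ℝ (ℓ - 1) : Submodule ℝ (Polynomial ℝ)) => (z.2.2 : Polynomial ℝ)) hxy
      simp only [hL, LinearMap.coe_mk, AddHom.coe_mk] at h0 h1 h2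
      apply Subtype.ext
      have hz : x.1 - y.1 = 0 := by
        refine hker (x.1 - y.1) (Submodule.sub_mem _ x.2 y.2) ?_ ?_ ?_
        · simp [h0]
        · simp [h1]
        · rw [hprojsub, h2, sub_self]
      exact sub_eq_zero.mp hz
    have e1 : Module.finrank ℝ (Polynomial.degreeLT ℝ (ℓ + 1) : Submodule ℝ (Polynomial ℝ)) = ℓ + 1 :=
      (Polynomial.degreeLTEquiv ℝ (ℓ + 1)).finrank_eq.trans (Module.finrank_fin_fun ℝ)
    have e2 : Module.finrank ℝ (Polynomial.degreeLT ℝ (ℓ - 1) : Submodule ℝ (Polynomial ℝ)) = ℓ - 1 :=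
      (Polynomial.degreeLTEquiv ℝ (ℓ - 1)).finrank_eq.trans (Module.finrank_fin_fun ℝ)
    have hrank : Module.finrank ℝ (Polynomial.degreeLT ℝ (ℓ + 1) : Submodule ℝ (Polynomial ℝ)) =
        Module.finrank ℝ (ℝ × ℝ × (Polynomial.degreeLT ℝ (ℓ - 1) : Submodule ℝ (Polynomial ℝ))) := by
      rw [Module.finrank_prod, Module.finrank_prod, Module.finrank_self, e1, e2]
      omega
    have hsurj := (LinearMap.injective_iff_surjective_of_finrank_eq_finrank hrank).mp hinj
    intro c hc
    obtain ⟨x, hx⟩ := hsurj (c.1, c.2.1, ⟨c.2.2, hc⟩)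
    refine ⟨x.1, x.2, ?_⟩
    have h0 := congrArg Prod.fst hx
    have h1 := congrArg (fun z : ℝ × ℝ × (Polynomial.degreeLT ℝ (ℓ - 1) : Submodule ℝ (Polynomial ℝ)) => z.2.1) hx
    have h2 := congrArg (fun z : ℝ × ℝ × (Polynomial.degreeLT ℝ (ℓ - 1) : Submodule ℝ (Polynomial ℝ)) => (z.2.2 : Polynomial ℝ)) hx
    simp only [hL, LinearMap.coe_mk, AddHom.coe_mk] at h0 h1 h2
    show (x.1.eval 0, x.1.eval 1, proj x.1) = c
    rw [h0, h1, h2]
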